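/- arXiv:0805.3997 — 3 statements merged into one kernel-verified Lean document; each statement's English description precedes it below -/
import Mathlib

section
/- Let $k$ be a perfect field of characteristic $p>0$, $A = k[x,y]$, and let $A^p \subseteq A$ be the $k$-subalgebra generated by $x^p$, $y^p$, and $xy$. Then $A^p$ is isomorphic to $k[X,Y,t]/(XY - t^p)$ via $X \mapsto x^p$, $Y \mapsto y^p$, $t \mapsto xy$. -/
open MvPolynomial


variable {k : Type} [Field k]

section ExpandCoeff

lemma expand_monomial' (p : ℕ) (hp : 0 < p) (d : Fin 2 →₀ ℕ) (r : k) :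
    expand p (monomial d r) = monomial (p • d) r := by
  rw [expand_monomial, monomial_eq]

lemma coeff_expand_smul (p : ℕ) (hp : 0 < p) (a : MvPolynomial (Fin 2) k) (ν : Fin 2 →₀ ℕ) :
    coeff (p • ν) (expand p a) = coeff ν a := by
  induction a using MvPolynomial.induction_on' with
  | monomial d r =>
    rw [expand_monomial' p hp, coeff_monomial, coeff_monomial]
    by_cases h : d = ν
    · simp [h]
    · rw [if_neg, if_neg h]
      intro hc
      apply h
      ext j
      have := DFunLike.congr_fun hc j
      simp only [Finsupp.smul_apply, smul_eq_mul] at this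
      exact Nat.eq_of_mul_eq_mul_left hp this
  | add f g hf hg => simp [map_add, coeff_add, hf, hg]

lemma coeff_expand_not_dvd (p : ℕ) (hp : 0 < p) (a : MvPolynomial (Fin 2) k)
    (μ : Fin 2 →₀ ℕ) (j₀ : Fin 2) (h : ¬ p ∣ μ j₀) :
    coeff μ (expand p a) = 0 := by
  induction a using MvPolynomial.induction_on' with
  | monomial d r =>
    rw [expand_monomial' p hp, coeff_monomial, if_neg]
    intro hc
    apply h
    rw [← hc]
    exact ⟨d j₀, rfl⟩
  | add f g hf hg => simp [map_add, coeff_add, hf, hg]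

end ExpandCoeff

section Indep

lemma indep (p : ℕ) (hp : 0 < p) (a : ℕ → MvPolynomial (Fin 2) k)
    (h : ∑ i ∈ Finset.range p, expand p (a i) * (X 0 * X 1 : MvPolynomial (Fin 2) k) ^ i = 0)
    (i₀ : ℕ) (hi₀ : i₀ < p) : a i₀ = 0 := by
  ext ν
  rw [coeff_zero]
  set u : Fin 2 →₀ ℕ := Finsupp.single 0 1 + Finsupp.single 1 1 with hu
  have hu0 : u 0 = 1 := by simp [hu]
  have hXY : (X 0 * X 1 : MvPolynomial (Fin 2) k) = monomial u 1 := by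
    rw [hu]; rw [X, X, monomial_mul, one_mul]
  have hpow : ∀ i : ℕ, (X 0 * X 1 : MvPolynomial (Fin 2) k) ^ i = monomial (i • u) 1 := by
    intro i; rw [hXY, monomial_pow, one_pow]
  set μ : Fin 2 →₀ ℕ := p • ν + i₀ • u with hμ
  have hμ0 : μ 0 = p * ν 0 + i₀ := by
    simp [hμ, hu0, Finsupp.add_apply, Finsupp.smul_apply, mul_comm]
  have hcoeff := congrArg (coeff μ) h
  rw [coeff_zero, coeff_sum] at hcoeff
  have hterm : ∀ i ∈ Finset.range p, i ≠ i₀ →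
      coeff μ (expand p (a i) * (X 0 * X 1 : MvPolynomial (Fin 2) k) ^ i) = 0 := by
    intro i hi hne
    rw [hpow, coeff_mul_monomial']
    by_cases hle : i • u ≤ μ
    · rw [if_pos hle, mul_one]
      apply coeff_expand_not_dvd p hp _ _ 0
      have hle0 : i ≤ μ 0 := by
        have := hle 0
        simpa [Finsupp.smul_apply, hu0] using this
      rw [Finsupp.tsub_apply]
      have hiu0 : (i • u) 0 = i := by simp [Finsupp.smul_apply, hu0]
      rw [hiu0, hμ0]
      rintro ⟨c, hc⟩
      have hsum : p * c + i = p * ν 0 + i₀ := by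
        rw [← hc]
        rw [hμ0] at hle0
        omega
      have := congrArg (· % p) hsum
      simp only [Nat.mul_add_mod] at this
      rw [Nat.mod_eq_of_lt (Finset.mem_range.mp hi), Nat.mod_eq_of_lt hi₀] at this
      exact hne this
    · rw [if_neg hle]
  have h0 : coeff μ (expand p (a i₀) * (X 0 * X 1 : MvPolynomial (Fin 2) k) ^ i₀)
      = coeff ν (a i₀) := by
    rw [hpow, coeff_mul_monomial', if_pos, mul_one]
    · rw [hμ, add_tsub_cancel_right]
      exact coeff_expand_smul p hp _ _
    · rw [hμ]; exact le_add_self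
  rw [Finset.sum_eq_single_of_mem i₀ (Finset.mem_range.mpr hi₀) hterm, h0] at hcoeff
  exact hcoeff

end Indep

section Key

noncomputable def β (p : ℕ) : MvPolynomial (Fin 2) k →+* MvPolynomial (Fin 2) k :=
  (expand p : MvPolynomial (Fin 2) k →ₐ[k] MvPolynomial (Fin 2) k).toRingHom

lemma reduced_zero (p : ℕ) (hp : 0 < p) (r : Polynomial (MvPolynomial (Fin 2) k))
    (hdeg : r.degree < (p : ℕ)) (h : Polynomial.eval₂ (β p) (X 0 * X 1) r = 0) :
    r = 0 := by
  by_cases hr : r = 0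
  · exact hr
  have hnd : r.natDegree < p := (Polynomial.natDegree_lt_iff_degree_lt hr).mpr hdeg
  rw [Polynomial.eval₂_eq_sum_range' (β p) hnd (X 0 * X 1)] at h
  have hz := indep p hp (fun i => r.coeff i) h
  apply Polynomial.ext
  intro i
  rw [Polynomial.coeff_zero]
  by_cases hi : i < p
  · exact hz i hi
  · exact Polynomial.coeff_eq_zero_of_degree_lt (lt_of_lt_of_le hdeg (by exact_mod_cast Nat.le_of_not_lt hi))

end Key

section Division

lemma key_mem_span (p : ℕ) (hp : 0 < p) (G : Polynomial (MvPolynomial (Fin 2) k))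
    (h : Polynomial.eval₂ (β p) (X 0 * X 1) G = 0) :
    G ∈ Ideal.span {Polynomial.X ^ p - Polynomial.C (X 0 * X 1 : MvPolynomial (Fin 2) k)} := by
  set g : Polynomial (MvPolynomial (Fin 2) k) :=
    Polynomial.X ^ p - Polynomial.C (X 0 * X 1) with hg
  have hmonic : g.Monic := Polynomial.monic_X_pow_sub_C _ hp.ne'
  have hdvd : g ∣ G := by
    have hdiv := Polynomial.modByMonic_add_div G g
    have hevg : Polynomial.eval₂ (β p) (X 0 * X 1) g = 0 := by
      rw [hg]
      simp only [Polynomial.eval₂_sub, Polynomial.eval₂_pow, Polynomial.eval₂_X,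
        Polynomial.eval₂_C]
      have : (β p) (X 0 * X 1 : MvPolynomial (Fin 2) k) = X 0 ^ p * X 1 ^ p := by
        simp [β]
      rw [this, mul_pow, sub_self]
    have hr : G %ₘ g = 0 := by
      apply reduced_zero p hp _ (lt_of_lt_of_le (Polynomial.degree_modByMonic_lt G hmonic) ?_)
      · have := congrArg (Polynomial.eval₂ (β p) (X 0 * X 1)) hdiv
        rw [Polynomial.eval₂_add, Polynomial.eval₂_mul, hevg, zero_mul, add_zero, h] at this
        exact this
      · rw [hg]
        rw [Polynomial.degree_X_pow_sub_C hp]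
    refine ⟨G /ₘ g, ?_⟩
    conv_lhs => rw [← hdiv]
    rw [hr, zero_add]
  rwa [Ideal.mem_span_singleton]

end Division

section Transport

def σ3 : Fin 3 ≃ Fin 3 := ⟨![1,2,0], ![2,0,1], by decide, by decide⟩

noncomputable def Φ (k : Type) [Field k] :
    MvPolynomial (Fin 3) k ≃ₐ[k] Polynomial (MvPolynomial (Fin 2) k) :=
  (renameEquiv k σ3).trans (finSuccEquiv k 2)

lemma Φ_X0 : Φ k (X 0) = Polynomial.C (X 0) := by
  show finSuccEquiv k 2 (rename σ3 (X 0)) = _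
  rw [rename_X]
  show finSuccEquiv k 2 (X (Fin.succ 0)) = _
  rw [finSuccEquiv_X_succ]

lemma Φ_X1 : Φ k (X 1) = Polynomial.C (X 1) := by
  show finSuccEquiv k 2 (rename σ3 (X 1)) = _
  rw [rename_X]
  show finSuccEquiv k 2 (X (Fin.succ 1)) = _
  rw [finSuccEquiv_X_succ]

lemma Φ_X2 : Φ k (X 2) = Polynomial.X := by
  show finSuccEquiv k 2 (rename σ3 (X 2)) = _
  rw [rename_X]
  show finSuccEquiv k 2 (X 0) = _
  rw [finSuccEquiv_X_zero]

lemma Φ_C (r : k) : Φ k (C r) = Polynomial.C (C r) := by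
  rw [← MvPolynomial.algebraMap_eq, AlgEquiv.commutes]
  rw [Polynomial.algebraMap_apply, MvPolynomial.algebraMap_eq]

noncomputable def fs (k : Type) [Field k] (p : ℕ) : Fin 3 → MvPolynomial (Fin 2) k :=
  ![X 0 ^ p, X 1 ^ p, X 0 * X 1]

lemma ev_Φ (p : ℕ) (F : MvPolynomial (Fin 3) k) :
    Polynomial.eval₂ (β p) (X 0 * X 1) (Φ k F) = aeval (fs k p) F := by
  have hhom : (Polynomial.eval₂RingHom (β p) (X 0 * X 1)).comp
      ((Φ k : MvPolynomial (Fin 3) k →ₐ[k] Polynomial (MvPolynomial (Fin 2) k)) :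
        MvPolynomial (Fin 3) k →+* Polynomial (MvPolynomial (Fin 2) k))
      = ((aeval (fs k p) : MvPolynomial (Fin 3) k →ₐ[k] MvPolynomial (Fin 2) k) :
          MvPolynomial (Fin 3) k →+* MvPolynomial (Fin 2) k) := by
    apply MvPolynomial.ringHom_ext
    · intro r
      show Polynomial.eval₂ (β p) (X 0 * X 1) (Φ k (C r)) = aeval (fs k p) (C r)
      rw [Φ_C]
      simp [β, expand_C, aeval_C, MvPolynomial.algebraMap_eq]
    · intro i
      fin_cases i
      · show Polynomial.eval₂ (β p) (X 0 * X 1) (Φ k (X 0)) = aeval (fs k p) (X 0)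
        rw [Φ_X0]
        simp [β, fs]
      · show Polynomial.eval₂ (β p) (X 0 * X 1) (Φ k (X 1)) = aeval (fs k p) (X 1)
        rw [Φ_X1]
        simp [β, fs]
      · show Polynomial.eval₂ (β p) (X 0 * X 1) (Φ k (X 2)) = aeval (fs k p) (X 2)
        rw [Φ_X2]
        simp [β, fs]
  exact DFunLike.congr_fun hhom F

lemma ker_le (p : ℕ) (hp : 0 < p) (F : MvPolynomial (Fin 3) k)
    (hF : aeval (fs k p) F = 0) :
    F ∈ Ideal.span {(X 0 : MvPolynomial (Fin 3) k) * X 1 - X 2 ^ p} := by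
  have h1 : Polynomial.eval₂ (β p) (X 0 * X 1) (Φ k F) = 0 := by rw [ev_Φ]; exact hF
  have h2 := key_mem_span p hp _ h1
  rw [Ideal.mem_span_singleton] at h2 ⊢
  obtain ⟨q, hq⟩ := h2
  refine ⟨-((Φ k).symm q), ?_⟩
  apply (Φ k).injective
  rw [hq]
  conv_rhs => rw [map_mul, map_neg, AlgEquiv.apply_symm_apply, map_sub, map_mul, map_pow,
    Φ_X0, Φ_X1, Φ_X2]
  rw [Polynomial.C_mul]
  ring

end Transport

/-- Let `k` be a perfect field of characteristic `p > 0`,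
`A = k[x,y]`, and let `Aᵖ ⊆ A` be the `k`-subalgebra generated by `x^p`, `y^p`
and `x*y`.  Then `Aᵖ` is isomorphic to `k[X,Y,t]/(XY - t^p)` via
`X ↦ x^p`, `Y ↦ y^p`, `t ↦ x*y`. -/
theorem subalgebra_iso_quotient
    (k : Type) [Field k] (p : ℕ) [Fact p.Prime] [CharP k p] [PerfectRing k p] :
    let A := MvPolynomial (Fin 2) k
    let x : A := X 0
    let y : A := X 1
    let Ap : Subalgebra k A := Algebra.adjoin k {x ^ p, y ^ p, x * y}
    let I : Ideal (MvPolynomial (Fin 3) k) :=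
      Ideal.span {(X 0 : MvPolynomial (Fin 3) k) * X 1 - (X 2) ^ p}
    ∃ e : (MvPolynomial (Fin 3) k ⧸ I) ≃ₐ[k] Ap,
      ((e (Ideal.Quotient.mk I (X 0)) : Ap) : A) = x ^ p ∧
      ((e (Ideal.Quotient.mk I (X 1)) : Ap) : A) = y ^ p ∧
      ((e (Ideal.Quotient.mk I (X 2)) : Ap) : A) = x * y := by
  intro A x y Ap I
  have hp : 0 < p := (Fact.out (p := p.Prime)).pos
  -- the evaluation homomorphism
  set φ : MvPolynomial (Fin 3) k →ₐ[k] A := aeval (fs k p) with hφ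
  have hset : Set.range (fs k p) = {x ^ p, y ^ p, x * y} := by
    ext z
    constructor
    · rintro ⟨i, rfl⟩
      fin_cases i
      · left; simp [fs, x]
      · right; left; simp [fs, y]
      · right; right; simp [fs, x, y]
    · rintro (rfl | rfl | rfl)
      exacts [⟨0, by simp [fs, x]⟩, ⟨1, by simp [fs, y]⟩, ⟨2, by simp [fs, x, y]⟩]
  have hrange : φ.range = Ap := by
    rw [hφ, ← Algebra.adjoin_range_eq_range_aeval, hset]
  have hmem : ∀ F, φ F ∈ Ap := by
    intro F
    rw [← hrange]
    exact ⟨F, rfl⟩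
  set φ' : MvPolynomial (Fin 3) k →ₐ[k] Ap := φ.codRestrict Ap hmem with hφ'
  have hcoe : ∀ F, ((φ' F : Ap) : A) = φ F := fun F => rfl
  have hsurj : Function.Surjective φ' := by
    rintro ⟨a, ha⟩
    rw [← hrange] at ha
    obtain ⟨F, hF⟩ := ha
    exact ⟨F, Subtype.ext (by rw [hcoe]; exact hF)⟩
  have hker : RingHom.ker φ' = I := by
    ext F
    rw [RingHom.mem_ker]
    constructor
    · intro h0
      have : φ F = 0 := by rw [← hcoe, h0]; rfl
      exact ker_le p hp F this
    · intro hI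
      rw [Ideal.mem_span_singleton] at hI
      obtain ⟨q, rfl⟩ := hI
      apply Subtype.ext
      rw [hcoe]
      rw [map_mul, map_sub, map_mul, map_pow]
      have h0 : φ (X 0) = x ^ p := by simp [hφ, fs, aeval_X, x]
      have h1 : φ (X 1) = y ^ p := by simp [hφ, fs, aeval_X, y]
      have h2 : φ (X 2) = x * y := by simp [hφ, fs, aeval_X, x, y]
      rw [h0, h1, h2, mul_pow, sub_self, zero_mul]
      rfl
  refine ⟨(Ideal.quotientEquivAlgOfEq k hker.symm).trans
    (Ideal.quotientKerAlgEquivOfSurjective hsurj), ?_, ?_, ?_⟩ <;>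
    · rw [AlgEquiv.trans_apply, Ideal.quotientEquivAlgOfEq_mk]
      rw [show (Ideal.quotientKerAlgEquivOfSurjective hsurj)
        (Ideal.Quotient.mk (RingHom.ker φ') _) = φ' _ from rfl]
      rw [hcoe]
      simp [hφ, fs, aeval_X, x, y]
end

section
/- Let $k$ be a perfect field of characteristic $p>0$, $A = k[x,y]$, and $A^p \subseteq A$ the $k$-subalgebra generated by $x^p, y^p, xy$. Then the quotient $A/A^p$ is generated as an $A^p$-module by the images of $x, x^2, \ldots, x^{p-1}, y, y^2, \ldots, y^{p-1}$. -/
open MvPolynomial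

set_option maxHeartbeats 1000000 in
set_option synthInstance.maxHeartbeats 400000 in
/-- For a perfect field `k` of characteristic `p > 0`,
`A = k[x,y]` and `Aᵖ ⊆ A` the `k`-subalgebra generated by `x^p, y^p, xy`,
the quotient `A/Aᵖ` is generated as an `Aᵖ`-module by the images of
`x, x², …, x^(p-1), y, y², …, y^(p-1)`. -/
theorem quotient_module_generators
    (k : Type) [Field k] (p : ℕ) [Fact p.Prime] [CharP k p] [PerfectRing k p] :
    let A := MvPolynomial (Fin 2) k
    let x : A := X 0
    let y : A := X 1
    let Ap : Subalgebra k A := Algebra.adjoin k {x ^ p, y ^ p, x * y}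
    -- `A/Aᵖ` as an `Aᵖ`-module: quotient of `A` by the `Aᵖ`-submodule `Aᵖ·1`
    let q : A → A ⧸ (Submodule.span (↥Ap) ({1} : Set A)) :=
      Submodule.Quotient.mk
    Submodule.span (↥Ap)
        ((fun i => q (x ^ i)) '' (Set.Ioo 0 p) ∪ (fun i => q (y ^ i)) '' (Set.Ioo 0 p))
      = ⊤ := by
  intro A x y Ap q
  have hp : 0 < p := (Fact.out : p.Prime).pos
  have hxy : x * y ∈ Ap := Algebra.subset_adjoin (by simp)
  have hxp : x ^ p ∈ Ap := Algebra.subset_adjoin (by simp)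
  have hyp : y ^ p ∈ Ap := Algebra.subset_adjoin (by simp)
  set S : Set A := ((fun i => x ^ i) '' Set.Ioo 0 p ∪ (fun i => y ^ i) '' Set.Ioo 0 p) ∪ {1}
    with hS
  have hmul : ∀ (u v : A), u ∈ Ap → v ∈ Submodule.span (↥Ap) S →
      u * v ∈ Submodule.span (↥Ap) S := by
    intro u v hu hv
    have := (Submodule.span (↥Ap) S).smul_mem ⟨u, hu⟩ hv
    simpa [Algebra.smul_def] using this
  have main : ∀ (a b : A), a * b ∈ Ap → a ^ p ∈ Ap →
      ((fun i => a ^ i) '' Set.Ioo 0 p ∪ {1} ⊆ S) →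
      ∀ n m : ℕ, m ≤ n → a ^ n * b ^ m ∈ Submodule.span (↥Ap) S := by
    intro a b hab hap hsub n m hmn
    have h1 : a ^ n * b ^ m = ((a * b) ^ m * (a ^ p) ^ ((n - m) / p)) * a ^ ((n - m) % p) := by
      rw [mul_pow, ← pow_mul, mul_assoc, ← pow_add, Nat.div_add_mod,
        mul_comm (a ^ m) (b ^ m), mul_assoc, ← pow_add, mul_comm]
      congr 2
      omega
    rw [h1]
    apply hmul
    · exact Ap.mul_mem (Ap.pow_mem hab m) (Ap.pow_mem hap _)
    · apply Submodule.subset_span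
      apply hsub
      rcases Nat.eq_zero_or_pos ((n - m) % p) with h | h
      · right; simp [h]
      · left; exact ⟨_, ⟨h, Nat.mod_lt _ hp⟩, rfl⟩
  have key : ∀ n m : ℕ, x ^ n * y ^ m ∈ Submodule.span (↥Ap) S := by
    intro n m
    rcases le_total m n with h | h
    · exact main x y hxy hxp
        (fun z hz => by rcases hz with hz | hz; exacts [Or.inl (Or.inl hz), Or.inr hz]) n m h
    · rw [mul_comm]
      exact main y x (by rwa [mul_comm]) hyp
        (fun z hz => by rcases hz with hz | hz; exacts [Or.inl (Or.inr hz), Or.inr hz]) m n h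
  have htop : Submodule.span (↥Ap) S = ⊤ := by
    rw [Submodule.eq_top_iff']
    intro f
    rw [MvPolynomial.as_sum f]
    apply Submodule.sum_mem
    intro v hv
    rw [MvPolynomial.monomial_eq]
    have hprod : (v.prod fun n e => (X n : A) ^ e) = x ^ v 0 * y ^ v 1 := by
      rw [Finsupp.prod_fintype _ _ (fun i => pow_zero _), Fin.prod_univ_two]
    rw [hprod]
    exact hmul _ _ ((MvPolynomial.algebraMap_eq k (Fin 2)) ▸ Ap.algebraMap_mem _) (key _ _)
  set N : Submodule (↥Ap) A := Submodule.span (↥Ap) ({1} : Set A) with hN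
  have hN1 : (1 : A) ∈ N := Submodule.subset_span rfl
  have hq0 : N.mkQ 1 = 0 := (Submodule.Quotient.mk_eq_zero N).mpr hN1
  apply top_unique
  calc (⊤ : Submodule (↥Ap) (A ⧸ N)) = Submodule.map N.mkQ ⊤ := by
        rw [Submodule.map_top, Submodule.range_mkQ]
    _ = Submodule.map N.mkQ (Submodule.span (↥Ap) S) := by rw [htop]
    _ = Submodule.span (↥Ap) (N.mkQ '' S) := Submodule.map_span _ _
    _ ≤ _ := by
        rw [hS, Set.image_union, Set.image_singleton, hq0, Set.image_union,
          Set.image_image, Set.image_image]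
        rw [Submodule.span_union, Submodule.span_zero_singleton, sup_bot_eq]
        exact le_of_eq (by rfl)
end

section
/- Let $k$ be a perfect field of characteristic $p>0$, $A = k[x,y]$, and $A^p \subseteq A$ the $k$-subalgebra generated by $x^p, y^p, xy$. Then $A/A^p$ decomposes as an $A^p$-module into the direct sum $\bigoplus_{i=1}^{p-1} M_i$, where $M_i$ is the $A^p$-submodule of $A/A^p$ generated by the images of $x^i$ and $y^{p-i}$. -/
open MvPolynomial

namespace QMDS

variable (k : Type) [Field k] (p : ℕ)

/-- The "class" of a monomial exponent: `d 0 - d 1` in `ZMod p`. -/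
def cls (d : Fin 2 →₀ ℕ) : ZMod p := (d 0 : ZMod p) - (d 1 : ZMod p)

lemma cls_add (d e : Fin 2 →₀ ℕ) : cls p (d + e) = cls p d + cls p e := by
  simp only [cls, Finsupp.add_apply]
  push_cast
  ring

/-- The `k`-linear projection onto the span of the monomials of class `c`. -/
noncomputable def Pc (c : ZMod p) :
    MvPolynomial (Fin 2) k →ₗ[k] MvPolynomial (Fin 2) k :=
  (MvPolynomial.basisMonomials (Fin 2) k).constr k
    (fun d => if cls p d = c then MvPolynomial.monomial d (1 : k) else 0)

lemma Pc_monomial (c : ZMod p) (d : Fin 2 →₀ ℕ) (a : k) :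
    Pc k p c (monomial d a) =
      if cls p d = c then monomial d a else 0 := by
  have h : (monomial d a : MvPolynomial (Fin 2) k)
      = a • (MvPolynomial.basisMonomials (Fin 2) k d) := by
    rw [coe_basisMonomials]
    simp [smul_monomial]
  rw [h, map_smul, Pc, Module.Basis.constr_basis]
  split <;> simp [smul_monomial]

lemma Pc_mul_monomial (c : ZMod p) (d0 : Fin 2 →₀ ℕ) (h : cls p d0 = 0) (b : k)
    (f : MvPolynomial (Fin 2) k) :
    Pc k p c (monomial d0 b * f) = monomial d0 b * Pc k p c f := by
  induction f using MvPolynomial.induction_on' with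
  | monomial d a =>
      rw [monomial_mul, Pc_monomial, Pc_monomial, cls_add, h, zero_add]
      split <;> simp [monomial_mul]
  | add f g hf hg =>
      rw [mul_add, map_add, map_add, mul_add, hf, hg]

lemma Pc_mul_mem (c : ZMod p) {α : MvPolynomial (Fin 2) k}
    (hα : α ∈ Algebra.adjoin k {(X 0 : MvPolynomial (Fin 2) k) ^ p, X 1 ^ p, X 0 * X 1}) :
    ∀ f, Pc k p c (α * f) = α * Pc k p c f := by
  induction hα using Algebra.adjoin_induction with
  | mem g hg =>
      intro f
      rcases hg with rfl | rfl | rfl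
      · rw [X_pow_eq_monomial]
        exact Pc_mul_monomial k p c _ (by simp [cls, Finsupp.single_apply]) _ _
      · rw [X_pow_eq_monomial]
        exact Pc_mul_monomial k p c _ (by simp [cls, Finsupp.single_apply]) _ _
      · have hxy : (X 0 * X 1 : MvPolynomial (Fin 2) k)
            = monomial (Finsupp.single 0 1 + Finsupp.single 1 1) 1 := by
          rw [← pow_one (X 0 : MvPolynomial (Fin 2) k), ← pow_one (X 1 : MvPolynomial (Fin 2) k),
            X_pow_eq_monomial, X_pow_eq_monomial, monomial_mul, one_mul]
        rw [hxy]
        refine Pc_mul_monomial k p c _ ?_ _ _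
        rw [cls_add]
        simp [cls, Finsupp.single_apply]
  | algebraMap r =>
      intro f
      rw [MvPolynomial.algebraMap_eq, ← monomial_zero']
      exact Pc_mul_monomial k p c _ (by simp [cls]) _ _
  | add g h hg hh ihg ihh =>
      intro f
      rw [add_mul, map_add, ihg, ihh, add_mul]
  | mul g h hg hh ihg ihh =>
      intro f
      rw [mul_assoc, ihg, ihh, mul_assoc]

lemma Pc_x_pow (c : ZMod p) (n : ℕ) :
    Pc k p c ((X 0 : MvPolynomial (Fin 2) k) ^ n) =
      if (n : ZMod p) = c then (X 0 : MvPolynomial (Fin 2) k) ^ n else 0 := by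
  rw [X_pow_eq_monomial, Pc_monomial]
  have h0 : cls p (Finsupp.single (0 : Fin 2) n) = (n : ZMod p) := by
    simp [cls, Finsupp.single_apply]
  rw [h0]

lemma Pc_y_pow (c : ZMod p) (n : ℕ) :
    Pc k p c ((X 1 : MvPolynomial (Fin 2) k) ^ n) =
      if (-(n : ZMod p)) = c then (X 1 : MvPolynomial (Fin 2) k) ^ n else 0 := by
  rw [X_pow_eq_monomial, Pc_monomial]
  have h0 : cls p (Finsupp.single (1 : Fin 2) n) = (-(n : ZMod p)) := by
    simp [cls, Finsupp.single_apply]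
  rw [h0]

lemma Pc_one (c : ZMod p) (hc : c ≠ 0) : Pc k p c (1 : MvPolynomial (Fin 2) k) = 0 := by
  rw [show (1 : MvPolynomial (Fin 2) k) = monomial 0 1 by simp, Pc_monomial]
  simp [cls, hc.symm]

end QMDS


set_option maxHeartbeats 8000000 in
set_option synthInstance.maxHeartbeats 1000000 in
theorem QMDS.main_aux
    (k : Type) [Field k] (p : ℕ) [Fact p.Prime] :
    let A := MvPolynomial (Fin 2) k
    let x : A := X 0
    let y : A := X 1
    let Ap : Subalgebra k A := Algebra.adjoin k {x ^ p, y ^ p, x * y}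
    let q : A → A ⧸ (Submodule.span (↥Ap) ({1} : Set A)) :=
      Submodule.Quotient.mk
    let M : Fin (p - 1) → Submodule (↥Ap) (A ⧸ (Submodule.span (↥Ap) ({1} : Set A))) :=
      fun j => Submodule.span (↥Ap) {q (x ^ (j.1 + 1)), q (y ^ (p - (j.1 + 1)))}
    DirectSum.IsInternal M := by
  intro A x y Ap q M
  have hp : p.Prime := Fact.out
  haveI : NeZero p := ⟨hp.pos.ne'⟩
  have hp2 : 2 ≤ p := hp.two_le
  have hM : ∀ jj : Fin (p - 1), M jj
      = Submodule.span (↥Ap) {q (x ^ (jj.1 + 1)), q (y ^ (p - (jj.1 + 1)))} := fun _ => rfl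
  have hgen : ∀ g ∈ ({x ^ p, y ^ p, x * y} : Set A), g ∈ Ap := fun g hg =>
    Algebra.subset_adjoin hg
  -- `Pc` is `Ap`-linear
  have hPmul : ∀ (c : ZMod p) (α : ↥Ap) (f : A),
      QMDS.Pc k p c ((α : A) * f) = (α : A) * QMDS.Pc k p c f := by
    intro c α f
    exact QMDS.Pc_mul_mem k p c α.2 f
  let L : ZMod p → (A →ₗ[↥Ap] A) := fun c =>
    { toFun := QMDS.Pc k p c
      map_add' := fun f g => map_add _ f g
      map_smul' := fun α f => by
        simp only [RingHom.id_apply]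
        rw [Subalgebra.smul_def, smul_eq_mul, Subalgebra.smul_def, smul_eq_mul]
        exact hPmul c α f }
  have hLN : ∀ c : ZMod p, c ≠ 0 →
      Submodule.span (↥Ap) ({1} : Set A)
        ≤ (Submodule.span (↥Ap) ({1} : Set A)).comap (L c) := by
    intro c hc
    rw [Submodule.span_le]
    intro g hg
    rw [Set.mem_singleton_iff] at hg
    subst hg
    have h1 : L c 1 = 0 := QMDS.Pc_one k p c hc
    simp only [SetLike.mem_coe, Submodule.mem_comap, h1]
    exact zero_mem _
  let ψ : ∀ c : ZMod p, c ≠ 0 →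
      (A ⧸ (Submodule.span (↥Ap) ({1} : Set A))) →ₗ[↥Ap]
      (A ⧸ (Submodule.span (↥Ap) ({1} : Set A))) := fun c hc =>
    Submodule.mapQ _ _ (L c) (hLN c hc)
  have hψ : ∀ (c : ZMod p) (hc : c ≠ 0) (f : A),
      ψ c hc (q f) = q (QMDS.Pc k p c f) := fun c hc f => rfl
  have hψx : ∀ (c : ZMod p) (hc : c ≠ 0) (nn : ℕ),
      ψ c hc (q (x ^ nn)) = if (nn : ZMod p) = c then q (x ^ nn) else 0 := by
    intro c hc nn
    rw [hψ c hc]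
    show Submodule.Quotient.mk (QMDS.Pc k p c ((X 0 : MvPolynomial (Fin 2) k) ^ nn)) = _
    rw [QMDS.Pc_x_pow]
    split
    · rfl
    · exact Submodule.Quotient.mk_zero _
  have hψy : ∀ (c : ZMod p) (hc : c ≠ 0) (nn : ℕ),
      ψ c hc (q (y ^ nn)) = if (-(nn : ZMod p)) = c then q (y ^ nn) else 0 := by
    intro c hc nn
    rw [hψ c hc]
    show Submodule.Quotient.mk (QMDS.Pc k p c ((X 1 : MvPolynomial (Fin 2) k) ^ nn)) = _
    rw [QMDS.Pc_y_pow]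
    split
    · rfl
    · exact Submodule.Quotient.mk_zero _
  have hq0 : ∀ f : A, f ∈ Ap → q f = 0 := by
    intro f hf
    have hmem : f ∈ Submodule.span (↥Ap) ({1} : Set A) :=
      Submodule.mem_span_singleton.mpr
        ⟨⟨f, hf⟩, by rw [Subalgebra.smul_def, smul_eq_mul, mul_one]⟩
    exact (Submodule.Quotient.mk_eq_zero _).mpr hmem
  have hmono : ∀ (a : k) (m n : ℕ), (m : ZMod p) = (n : ZMod p) →
      C a * x ^ m * y ^ n ∈ Ap := by
    intro a m n h
    have hCa : (C a : A) ∈ Ap := by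
      rw [← MvPolynomial.algebraMap_eq]
      exact Subalgebra.algebraMap_mem Ap a
    rcases le_total n m with hle | hle
    · have hd : (((m - n : ℕ)) : ZMod p) = 0 := by
        rw [Nat.cast_sub hle, h, sub_self]
      obtain ⟨t, ht⟩ := (ZMod.natCast_eq_zero_iff _ _).mp hd
      have hm : m = n + p * t := by omega
      have heq : C a * x ^ m * y ^ n = C a * ((x * y) ^ n * (x ^ p) ^ t) := by
        rw [hm]; ring
      rw [heq]
      exact mul_mem hCa (mul_mem (pow_mem (hgen _ (by simp)) n)
        (pow_mem (hgen _ (by simp)) t))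
    · have hd : (((n - m : ℕ)) : ZMod p) = 0 := by
        rw [Nat.cast_sub hle, h, sub_self]
      obtain ⟨t, ht⟩ := (ZMod.natCast_eq_zero_iff _ _).mp hd
      have hm : n = m + p * t := by omega
      have heq : C a * x ^ m * y ^ n = C a * ((x * y) ^ m * (y ^ p) ^ t) := by
        rw [hm]; ring
      rw [heq]
      exact mul_mem hCa (mul_mem (pow_mem (hgen _ (by simp)) m)
        (pow_mem (hgen _ (by simp)) t))
  -- the sup is everything
  have htop : ⨆ j, M j = ⊤ := by
    rw [eq_top_iff]
    rintro v -
    obtain ⟨f, rfl⟩ := Submodule.Quotient.mk_surjective _ v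
    induction f using MvPolynomial.induction_on' with
    | add f g hf hg =>
        rw [Submodule.Quotient.mk_add]
        exact add_mem hf hg
    | monomial d a =>
        have hd' : ∀ (m n : ℕ), d = Finsupp.single 0 m + Finsupp.single 1 n →
            (monomial d a : A) = C a * x ^ m * y ^ n := by
          intro m n hsplit
          rw [hsplit, monomial_add_single, ← C_mul_X_pow_eq_monomial]
        have hd : (monomial d a : A) = C a * x ^ (d 0) * y ^ (d 1) := by
          refine hd' (d 0) (d 1) ?_
          ext i
          fin_cases i <;> simp [Finsupp.single_apply]
        by_cases hc : ((d 0 : ZMod p) - (d 1 : ZMod p)) = 0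
        · have hmem : (monomial d a : A) ∈ Ap := by
            rw [hd]; exact hmono a _ _ (sub_eq_zero.mp hc)
          have h0 : Submodule.Quotient.mk (p := Submodule.span (↥Ap) ({1} : Set A))
              (monomial d a) = 0 := hq0 _ hmem
          rw [h0]
          exact zero_mem _
        · set c : ZMod p := (d 0 : ZMod p) - (d 1 : ZMod p) with hcdef
          have hi0 : c.val ≠ 0 := fun h => hc (by rwa [← ZMod.val_eq_zero])
          have hip : c.val < p := ZMod.val_lt c
          have hci : ((c.val : ℕ) : ZMod p) = c := ZMod.natCast_zmod_val c
          set i := c.val with hidef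
          have hlt : i - 1 < p - 1 := by omega
          refine Submodule.mem_iSup_of_mem ⟨i - 1, hlt⟩ ?_
          have hj1 : ((⟨i - 1, hlt⟩ : Fin (p - 1)).1 + 1) = i := by
            show i - 1 + 1 = i; omega
          rw [hM, hj1]
          rcases le_or_gt i (d 0) with him | him
          · have hg : C a * x ^ (d 0 - i) * y ^ (d 1) ∈ Ap := by
              refine hmono _ _ _ ?_
              rw [Nat.cast_sub him, hci, hcdef]
              ring
            have hxp : x ^ (d 0) = x ^ (d 0 - i) * x ^ i := by
              rw [← pow_add, Nat.sub_add_cancel him]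
            have heq : (monomial d a : A) = (C a * x ^ (d 0 - i) * y ^ (d 1)) * x ^ i := by
              rw [hd, hxp]; ring
            have hsm : Submodule.Quotient.mk (p := Submodule.span (↥Ap) ({1} : Set A))
                (monomial d a) = (⟨_, hg⟩ : ↥Ap) • q (x ^ i) := by
              have hsmul : (⟨C a * x ^ (d 0 - i) * y ^ (d 1), hg⟩ : ↥Ap) • (x ^ i)
                  = (C a * x ^ (d 0 - i) * y ^ (d 1)) * x ^ i := by
                rw [Subalgebra.smul_def, smul_eq_mul]
              rw [heq, ← hsmul]
              exact Submodule.Quotient.mk_smul _ _ _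
            rw [hsm]
            refine Submodule.smul_mem _ _ (Submodule.subset_span ?_)
            left; rfl
          · have hn : p - i ≤ d 1 := by
              by_contra hlt2
              push_neg at hlt2
              have h1 : ((d 1 : ℕ) : ZMod p) = ((d 0 + (p - i) : ℕ) : ZMod p) := by
                rw [Nat.cast_add, Nat.cast_sub hip.le, ZMod.natCast_self, hci, hcdef]
                ring
              have h2 := congrArg ZMod.val h1
              rw [ZMod.val_cast_of_lt (by omega), ZMod.val_cast_of_lt (by omega)] at h2
              omega
            have hg : C a * x ^ (d 0) * y ^ (d 1 - (p - i)) ∈ Ap := by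
              refine hmono _ _ _ ?_
              rw [Nat.cast_sub hn, Nat.cast_sub hip.le, ZMod.natCast_self, hci, hcdef]
              ring
            have hyp : y ^ (d 1) = y ^ (d 1 - (p - i)) * y ^ (p - i) := by
              rw [← pow_add, Nat.sub_add_cancel hn]
            have heq : (monomial d a : A)
                = (C a * x ^ (d 0) * y ^ (d 1 - (p - i))) * y ^ (p - i) := by
              rw [hd, hyp]; ring
            have hsm : Submodule.Quotient.mk (p := Submodule.span (↥Ap) ({1} : Set A))
                (monomial d a) = (⟨_, hg⟩ : ↥Ap) • q (y ^ (p - i)) := by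
              have hsmul : (⟨C a * x ^ (d 0) * y ^ (d 1 - (p - i)), hg⟩ : ↥Ap) • (y ^ (p - i))
                  = (C a * x ^ (d 0) * y ^ (d 1 - (p - i))) * y ^ (p - i) := by
                rw [Subalgebra.smul_def, smul_eq_mul]
              rw [heq, ← hsmul]
              exact Submodule.Quotient.mk_smul _ _ _
            rw [hsm]
            refine Submodule.smul_mem _ _ (Submodule.subset_span ?_)
            right; rfl
  -- independence
  rw [DirectSum.isInternal_submodule_iff_iSupIndep_and_iSup_eq_top]
  refine ⟨?_, htop⟩
  rw [iSupIndep_def]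
  intro j
  rw [Submodule.disjoint_def]
  intro v hvj hvrest
  have hjp : j.1 + 1 < p := by omega
  have hcp : ((j.1 + 1 : ℕ) : ZMod p) ≠ 0 := by
    intro h
    have hdvd := (ZMod.natCast_eq_zero_iff _ _).mp h
    have := Nat.le_of_dvd (by omega) hdvd
    omega
  have hyc : ∀ l : Fin (p - 1),
      (-((p - (l.1 + 1) : ℕ) : ZMod p)) = ((l.1 + 1 : ℕ) : ZMod p) := by
    intro l
    rw [Nat.cast_sub (by omega), ZMod.natCast_self, zero_sub, neg_neg]
  have hfix : ψ _ hcp v = v := by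
    have hle : M j ≤ LinearMap.eqLocus (ψ _ hcp) LinearMap.id := by
      rw [hM, Submodule.span_le]
      intro g hg
      simp only [Set.mem_insert_iff, Set.mem_singleton_iff] at hg
      rw [SetLike.mem_coe, LinearMap.mem_eqLocus]
      rcases hg with rfl | rfl
      · rw [hψx _ hcp, if_pos rfl]; rfl
      · rw [hψy _ hcp, if_pos (hyc j)]; rfl
    exact hle hvj
  have hkill : ψ _ hcp v = 0 := by
    have hle : (⨆ (l) (_ : l ≠ j), M l) ≤ LinearMap.ker (ψ _ hcp) := by
      refine iSup_le fun l => iSup_le fun hlj => ?_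
      have hlp : l.1 + 1 < p := by omega
      have hne : ((l.1 + 1 : ℕ) : ZMod p) ≠ ((j.1 + 1 : ℕ) : ZMod p) := by
        intro h
        have h2 := congrArg ZMod.val h
        rw [ZMod.val_cast_of_lt hlp, ZMod.val_cast_of_lt hjp] at h2
        exact hlj (Fin.ext (by omega))
      rw [hM, Submodule.span_le]
      intro g hg
      simp only [Set.mem_insert_iff, Set.mem_singleton_iff] at hg
      rw [SetLike.mem_coe, LinearMap.mem_ker]
      rcases hg with rfl | rfl
      · rw [hψx _ hcp, if_neg hne]
      · rw [hψy _ hcp, if_neg (by rw [hyc l]; exact hne)]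
    rw [← LinearMap.mem_ker]
    exact hle hvrest
  rw [hfix] at hkill
  exact hkill



set_option maxHeartbeats 1000000 in
set_option synthInstance.maxHeartbeats 400000 in
/-- For a perfect field `k` of characteristic `p > 0`,
`A = k[x,y]` and `Aᵖ ⊆ A` the `k`-subalgebra generated by `x^p, y^p, xy`,
the `Aᵖ`-module `A/Aᵖ` is the internal direct sum `⨁_{i=1}^{p-1} M_i`,
where `M_i` is the `Aᵖ`-submodule generated by the images of `x^i` and
`y^(p-i)`.  (Here `i = j + 1` for `j : Fin (p-1)`.) -/
theorem quotient_module_direct_sum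
    (k : Type) [Field k] (p : ℕ) [Fact p.Prime] [CharP k p] [PerfectRing k p] :
    let A := MvPolynomial (Fin 2) k
    let x : A := X 0
    let y : A := X 1
    let Ap : Subalgebra k A := Algebra.adjoin k {x ^ p, y ^ p, x * y}
    let q : A → A ⧸ (Submodule.span (↥Ap) ({1} : Set A)) :=
      Submodule.Quotient.mk
    let M : Fin (p - 1) → Submodule (↥Ap) (A ⧸ (Submodule.span (↥Ap) ({1} : Set A))) :=
      fun j => Submodule.span (↥Ap) {q (x ^ (j.1 + 1)), q (y ^ (p - (j.1 + 1)))}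
    DirectSum.IsInternal M :=
  QMDS.main_aux k p
end
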